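/- arXiv:1903.05817 — 5 statements merged into one kernel-verified Lean document; each statement's English description precedes it below -/
import Mathlib

section
/- Under the Bayesian update with strictly positive likelihoods and full-support prior driven by i.i.d. signals from l(·|θ*), the limit π_∞(θ*) = lim_{t→∞} π_t(θ*) exists almost surely and satisfies π_∞(θ*) ≥ π_0(θ*). -/
/-!
The normaliser of the Bayes update cancels in likelihood ratios:
`b_t(p) / b_t(θ*) = b_0(p) / b_0(θ*) · ∏_{i=1}^t l(s_i | p) / l(s_i | θ*)`.
If `l(·|p) = l(·|θ*)` this ratio stays at its prior value. Otherwise, by the strong law of large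
numbers the log of the product grows like `t` times the expected log-likelihood ratio, which is
negative by Gibbs' inequality, so the ratio tends to `0`. Hence `1 / b_t(θ*) = ∑_p b_t(p) / b_t(θ*)`
converges to the sum of `b_0(p) / b_0(θ*)` over the `p` with `l(·|p) = l(·|θ*)`, a number between
`1` and `1 / b_0(θ*)`.
-/

open Finset MeasureTheory ProbabilityTheory Filter Topology

lemma sum_mul_log_div_neg {S : Type*} [Fintype S] {p q : S → ℝ} (hp : ∀ w, 0 < p w)
    (hq : ∀ w, 0 < q w) (hps : ∑ w, p w = 1) (hqs : ∑ w, q w = 1) (hne : p ≠ q) :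
    ∑ w, p w * Real.log (q w / p w) < 0 := by
  obtain ⟨w₀, hw₀⟩ := Function.ne_iff.1 hne
  have hlin : ∀ w, p w * (q w / p w - 1) = q w - p w := fun w => by
    rw [mul_sub, mul_div_cancel₀ _ (hp w).ne', mul_one]
  calc ∑ w, p w * Real.log (q w / p w) < ∑ w, (q w - p w) := by
        refine sum_lt_sum (fun w _ => ?_) ⟨w₀, mem_univ _, ?_⟩
        · rw [← hlin]
          exact mul_le_mul_of_nonneg_left
            (Real.log_le_sub_one_of_pos (div_pos (hq w) (hp w))) (hp w).le
        · rw [← hlin]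
          refine mul_lt_mul_of_pos_left (Real.log_lt_sub_one_of_pos
            (div_pos (hq w₀) (hp w₀)) fun h => hw₀ ?_) (hp w₀)
          exact ((div_eq_one_iff_eq (hp w₀).ne').1 h).symm
    _ = 0 := by rw [sum_sub_distrib, hps, hqs, sub_self]

lemma tendsto_atBot_of_tendsto_div_natCast {u : ℕ → ℝ} {c : ℝ} (hc : c < 0)
    (h : Tendsto (fun n : ℕ => u n / n) atTop (𝓝 c)) : Tendsto u atTop atBot := by
  refine (tendsto_natCast_atTop_atTop.atTop_mul_neg hc h).congr' ?_
  filter_upwards [eventually_ne_atTop 0] with n hn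
  exact mul_div_cancel₀ _ (Nat.cast_ne_zero.2 hn)

section IIDSignals

variable {Ω S : Type*} [MeasurableSpace Ω] {Pm : Measure Ω} [IsFiniteMeasure Pm]
  [Fintype S] [MeasurableSpace S] [MeasurableSingletonClass S] {s : ℕ → Ω → S} {q : S → ℝ}

theorem ae_tendsto_sum_div_of_iIndepFun (hmeas : ∀ t, Measurable (s t)) (hindep : iIndepFun s Pm)
    (hq : ∀ w, 0 ≤ q w) (hlaw : ∀ t w, Pm {ω | s t ω = w} = ENNReal.ofReal (q w)) (f : S → ℝ) :
    ∀ᵐ ω ∂Pm, Tendsto (fun n : ℕ => (∑ i ∈ range n, f (s i ω)) / n) atTop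
      (𝓝 (∑ w, q w * f w)) := by
  have hf : Measurable f := measurable_of_countable f
  have hmap : ∀ t w, Pm.map (s t) {w} = ENNReal.ofReal (q w) := fun t w =>
    (Measure.map_apply (hmeas t) (measurableSet_singleton w)).trans (hlaw t w)
  have hint : Integrable (fun ω => f (s 0 ω)) Pm :=
    (integrable_map_measure hf.aestronglyMeasurable (hmeas 0).aemeasurable).1 .of_finite
  have hmean : ∫ ω, f (s 0 ω) ∂Pm = ∑ w, q w * f w := by
    rw [← integral_map (hmeas 0).aemeasurable hf.aestronglyMeasurable,
      integral_fintype .of_finite]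
    refine sum_congr rfl fun w _ => ?_
    rw [measureReal_def, hmap 0 w, ENNReal.toReal_ofReal (hq w), smul_eq_mul]
  have hslln := strong_law_ae_real (fun i ω => f (s i ω)) hint
    (fun i j hij => (hindep.indepFun hij).comp hf hf)
    (fun i => IdentDistrib.comp ⟨(hmeas i).aemeasurable, (hmeas 0).aemeasurable,
      Measure.ext_of_singleton fun w => (hmap i w).trans (hmap 0 w).symm⟩ hf)
  rwa [hmean] at hslln

theorem ae_tendsto_prod_zero_of_sum_mul_log_neg (hmeas : ∀ t, Measurable (s t))
    (hindep : iIndepFun s Pm) (hq : ∀ w, 0 ≤ q w)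
    (hlaw : ∀ t w, Pm {ω | s t ω = w} = ENNReal.ofReal (q w)) {g : S → ℝ} (hg : ∀ w, 0 < g w)
    (hneg : ∑ w, q w * Real.log (g w) < 0) :
    ∀ᵐ ω ∂Pm, Tendsto (fun n => ∏ i ∈ range n, g (s i ω)) atTop (𝓝 0) := by
  filter_upwards [ae_tendsto_sum_div_of_iIndepFun hmeas hindep hq hlaw (Real.log ∘ g)] with ω hω
  have hexp : ∀ n, Real.exp (∑ i ∈ range n, Real.log (g (s i ω))) = ∏ i ∈ range n, g (s i ω) :=
    fun n => by rw [Real.exp_sum]; exact prod_congr rfl fun i _ => Real.exp_log (hg _)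
  exact (Real.tendsto_exp_atBot.comp (tendsto_atBot_of_tendsto_div_natCast hneg hω)).congr hexp

end IIDSignals

section BayesUpdate

variable {Θ S : Type*} [Fintype Θ] {l : S → Θ → ℝ} {x : ℕ → S} {b : ℕ → Θ → ℝ}

lemma bayes_pos (hl : ∀ w θ, 0 < l w θ) (hb0 : ∀ θ, 0 < b 0 θ)
    (hrec : ∀ t θ, b (t + 1) θ = l (x (t + 1)) θ * b t θ / ∑ p, l (x (t + 1)) p * b t p) :
    ∀ t θ, 0 < b t θ := by
  intro t
  induction t with
  | zero => exact hb0
  | succ t ih =>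
    intro θ
    rw [hrec]
    exact div_pos (mul_pos (hl _ _) (ih θ))
      (sum_pos (fun p _ => mul_pos (hl _ _) (ih p)) ⟨θ, mem_univ θ⟩)

lemma bayes_sum_eq_one (hl : ∀ w θ, 0 < l w θ) (hb0 : ∀ θ, 0 < b 0 θ) (hb0sum : ∑ θ, b 0 θ = 1)
    (hrec : ∀ t θ, b (t + 1) θ = l (x (t + 1)) θ * b t θ / ∑ p, l (x (t + 1)) p * b t p) :
    ∀ t, ∑ θ, b t θ = 1 := by
  intro t
  cases t with
  | zero => exact hb0sum
  | succ t =>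
    obtain ⟨θ, -, -⟩ := exists_ne_zero_of_sum_ne_zero (hb0sum ▸ one_ne_zero)
    have hb := bayes_pos hl hb0 hrec t
    simp only [hrec, ← sum_div]
    exact div_self (sum_pos (fun p _ => mul_pos (hl _ _) (hb p)) ⟨θ, mem_univ θ⟩).ne'

lemma bayes_div_eq_prod (hl : ∀ w θ, 0 < l w θ) (hb0 : ∀ θ, 0 < b 0 θ)
    (hrec : ∀ t θ, b (t + 1) θ = l (x (t + 1)) θ * b t θ / ∑ p, l (x (t + 1)) p * b t p)
    (p q : Θ) (t : ℕ) :
    b t p / b t q = b 0 p / b 0 q * ∏ i ∈ range t, l (x (i + 1)) p / l (x (i + 1)) q := by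
  induction t with
  | zero => simp
  | succ t ih =>
    have hb := bayes_pos hl hb0 hrec t
    have hD : 0 < ∑ p, l (x (t + 1)) p * b t p :=
      sum_pos (fun p _ => mul_pos (hl _ _) (hb p)) ⟨q, mem_univ q⟩
    rw [prod_range_succ, ← mul_assoc, ← ih, hrec, hrec]
    field_simp [(hb q).ne', (hl (x (t + 1)) q).ne', hD.ne']

lemma bayes_eq_inv_sum_div (hl : ∀ w θ, 0 < l w θ) (hb0 : ∀ θ, 0 < b 0 θ)
    (hb0sum : ∑ θ, b 0 θ = 1)
    (hrec : ∀ t θ, b (t + 1) θ = l (x (t + 1)) θ * b t θ / ∑ p, l (x (t + 1)) p * b t p)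
    (q : Θ) (t : ℕ) :
    b t q = (∑ p, b t p / b t q)⁻¹ := by
  rw [← sum_div, bayes_sum_eq_one hl hb0 hb0sum hrec t, one_div, inv_inv]

theorem bayes_tendsto_of_tendsto_prod_div (hl : ∀ w θ, 0 < l w θ) (hb0 : ∀ θ, 0 < b 0 θ)
    (hb0sum : ∑ θ, b 0 θ = 1)
    (hrec : ∀ t θ, b (t + 1) θ = l (x (t + 1)) θ * b t θ / ∑ p, l (x (t + 1)) p * b t p)
    (q : Θ) (hsep : ∀ p, (∃ w, l w p ≠ l w q) →
      Tendsto (fun t => ∏ i ∈ range t, l (x (i + 1)) p / l (x (i + 1)) q) atTop (𝓝 0)) :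
    ∃ L, b 0 q ≤ L ∧ Tendsto (fun t => b t q) atTop (𝓝 L) := by
  classical
  set R : Θ → ℝ := fun p => if ∀ w, l w p = l w q then b 0 p / b 0 q else 0 with hR
  have hR_nonneg : ∀ p, 0 ≤ R p := fun p => by
    by_cases hp : ∀ w, l w p = l w q <;> simp [hR, hp, div_nonneg (hb0 p).le (hb0 q).le]
  have hR_le : ∀ p, R p ≤ b 0 p / b 0 q := fun p => by
    by_cases hp : ∀ w, l w p = l w q <;> simp [hR, hp, div_nonneg (hb0 p).le (hb0 q).le]
  have hRq : R q = 1 := by simp [hR, (hb0 q).ne']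
  have hratio : ∀ p, Tendsto (fun t => b t p / b t q) atTop (𝓝 (R p)) := fun p => by
    refine Tendsto.congr (fun t => (bayes_div_eq_prod hl hb0 hrec p q t).symm) ?_
    by_cases hp : ∀ w, l w p = l w q
    · simp [hR, hp, div_self (hl _ q).ne']
    · simpa [hR, hp] using (hsep p (not_forall.1 hp)).const_mul (b 0 p / b 0 q)
  have hsum_pos : 0 < ∑ p, R p :=
    (hRq.symm ▸ one_pos).trans_le (single_le_sum (fun p _ => hR_nonneg p) (mem_univ q))
  have hsum_le : ∑ p, R p ≤ (b 0 q)⁻¹ := by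
    refine (sum_le_sum fun p _ => hR_le p).trans_eq ?_
    rw [← sum_div, hb0sum, one_div]
  refine ⟨(∑ p, R p)⁻¹, ?_, ?_⟩
  · simpa using inv_anti₀ hsum_pos hsum_le
  · exact ((tendsto_finsetSum _ fun p _ => hratio p).inv₀ hsum_pos.ne').congr
      fun t => (bayes_eq_inv_sum_div hl hb0 hb0sum hrec q t).symm

end BayesUpdate

/-- Under the Bayesian update driven by i.i.d. signals with law `l(·|θ*)`, the belief on the
true state converges almost surely to a limit that is at least the prior belief. -/
theorem stmt6 {Ω : Type*} [MeasurableSpace Ω] (Pm : Measure Ω) [IsProbabilityMeasure Pm]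
    {Θ S : Type*} [Fintype Θ] [Fintype S] [MeasurableSpace S] [MeasurableSingletonClass S]
    (l : S → Θ → ℝ) (hl : ∀ w θ, 0 < l w θ) (hlsum : ∀ θ, ∑ w, l w θ = 1)
    (θstar : Θ)
    (s : ℕ → Ω → S) (hmeas : ∀ t, Measurable (s t))
    (hindep : iIndepFun s Pm)
    (hlaw : ∀ t w, Pm {ω | s t ω = w} = ENNReal.ofReal (l w θstar))
    (π : ℕ → Θ → Ω → ℝ)
    (hπ0 : ∀ θ ω, 0 < π 0 θ ω) (hπ0sum : ∀ ω, ∑ θ, π 0 θ ω = 1)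
    (hrec : ∀ t θ ω, π (t + 1) θ ω =
      l (s (t + 1) ω) θ * π t θ ω / ∑ p, l (s (t + 1) ω) p * π t p ω) :
    ∀ᵐ ω ∂Pm, ∃ L : ℝ, π 0 θstar ω ≤ L ∧
      Tendsto (fun t => π t θstar ω) atTop (nhds L) := by
  have hsep : ∀ᵐ ω ∂Pm, ∀ p, (∃ w, l w p ≠ l w θstar) →
      Tendsto (fun t => ∏ i ∈ range t, l (s (i + 1) ω) p / l (s (i + 1) ω) θstar) atTop (𝓝 0) := by
    have hshift : iIndepFun (fun i => s (i + 1)) Pm := hindep.precomp (add_left_injective 1)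
    refine ae_all_iff.2 fun p => eventually_imp_distrib_left.2 ?_
    rintro ⟨w, hw⟩
    exact ae_tendsto_prod_zero_of_sum_mul_log_neg (g := fun w => l w p / l w θstar)
      (fun t => hmeas (t + 1)) hshift
      (fun w => (hl w θstar).le) (fun t => hlaw (t + 1)) (fun w => div_pos (hl w p) (hl w θstar))
      (sum_mul_log_div_neg (hl · θstar) (hl · p) (hlsum θstar) (hlsum p)
        fun h => hw (congrFun h w).symm)
  filter_upwards [hsep] with ω hω
  exact bayes_tendsto_of_tendsto_prod_div (x := fun t => s t ω) (b := fun t θ => π t θ ω) hl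
    (hπ0 · ω) (hπ0sum ω) (fun t θ => hrec t θ ω) θstar hω
end

section
/- Trimmed-mean filtering lemma: Let N be a finite set with |N| ≥ 2f+1, let A ⊆ N with |A| ≤ f (adversaries), and let R = N \ A. Given values x_j ∈ ℝ for j ∈ N, sort them and remove the f largest and f smallest, obtaining the retained set M ⊆ N. Then for every j ∈ M, x_j lies in the interval [min_{r∈R} x_r, max_{r∈R} x_r]. -/
open Finset

theorem exists_mem_sdiff_le_of_card_le {ι β : Type*} [DecidableEq ι] [Preorder β]
    {N S A : Finset ι} {x : ι → β} {j : ι} (hS : S ⊆ N) (hcard : A.card ≤ S.card)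
    (hlow : ∀ s ∈ S, ∀ i ∈ N \ S, x s ≤ x i) (hj : j ∈ N \ S) :
    ∃ r ∈ N \ A, x r ≤ x j := by
  by_cases hSA : S ⊆ A
  · rw [eq_of_subset_of_card_le hSA hcard] at hj
    exact ⟨j, hj, le_rfl⟩
  · obtain ⟨r, hrS, hrA⟩ := not_subset.mp hSA
    exact ⟨r, mem_sdiff.mpr ⟨hS hrS, hrA⟩, hlow r hrS j hj⟩

theorem stmt11_general {ι : Type*} [DecidableEq ι] (N : Finset ι) (f : ℕ)
    (A : Finset ι) (hAcard : A.card ≤ f)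
    (x : ι → ℝ)
    (U J : Finset ι) (hU : U ⊆ N) (hJ : J ⊆ N)
    (hUcard : U.card = f) (hJcard : J.card = f)
    (hUtop : ∀ u ∈ U, ∀ j ∈ N \ U, x j ≤ x u)
    (hJbot : ∀ u ∈ J, ∀ j ∈ N \ J, x u ≤ x j) :
    ∀ j ∈ N \ (U ∪ J),
      (∃ r ∈ N \ A, x r ≤ x j) ∧ (∃ r ∈ N \ A, x j ≤ x r) := by
  intro j hj
  have hjU : j ∈ N \ U := sdiff_subset_sdiff subset_rfl subset_union_left hj
  have hjJ : j ∈ N \ J := sdiff_subset_sdiff subset_rfl subset_union_right hj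
  exact ⟨exists_mem_sdiff_le_of_card_le hJ (hJcard ▸ hAcard) hJbot hjJ,
    exists_mem_sdiff_le_of_card_le (β := ℝᵒᵈ) hU (hUcard ▸ hAcard) hUtop hjU⟩

/-- Trimmed-mean filtering: after removing the `f` largest and `f` smallest values, every
retained value lies between the smallest and largest values held by regular (non-adversarial)
indices. -/
theorem stmt11 {ι : Type*} [DecidableEq ι] (N : Finset ι) (f : ℕ)
    (hN : 2 * f + 1 ≤ N.card)
    (A : Finset ι) (hA : A ⊆ N) (hAcard : A.card ≤ f)
    (x : ι → ℝ)
    (U J : Finset ι) (hU : U ⊆ N) (hJ : J ⊆ N)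
    (hUcard : U.card = f) (hJcard : J.card = f) (hUJ : Disjoint U J)
    (hUtop : ∀ u ∈ U, ∀ j ∈ N \ U, x j ≤ x u)
    (hJbot : ∀ u ∈ J, ∀ j ∈ N \ J, x u ≤ x j) :
    ∀ j ∈ N \ (U ∪ J),
      (∃ r ∈ N \ A, x r ≤ x j) ∧ (∃ r ∈ N \ A, x j ≤ x r) :=
  stmt11_general N f A hAcard x U J hU hJ hUcard hJcard hUtop hJbot
end

section
/- Let N be a finite set with |N| ≥ 2f+1, A ⊆ N with |A| ≤ f, R = N \ A, and values x_j ∈ ℝ. After removing the f indices with largest values (set U) and the f with smallest values (set J), retaining M = N \ (U ∪ J): if all j ∈ R ∩ S satisfy x_j < ε for some subset S with |N ∩ S| ≥ 2f+1, then min_{j∈M} x_j < ε. -/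
/-!
Since `|A| ≤ f`, there are at least `f + 1` regular sources, so one of them, `t`, escapes the `f`
indices `J` trimmed from below. If `t` is retained we are done; otherwise `t ∈ U`, and then any
retained index (one exists, as only `2f < |N|` indices are trimmed) has value at most `x t < ε`.
-/

open Finset

lemma exists_mem_sdiff_union_lt_of_notMem {ι α : Type*} [DecidableEq ι] [LinearOrder α]
    {N U J : Finset ι} {x : ι → α} {ε : α}
    (hUtop : ∀ u ∈ U, ∀ j ∈ N \ U, x j ≤ x u) (hM : (N \ (U ∪ J)).Nonempty)
    {t : ι} (htN : t ∈ N) (htJ : t ∉ J) (htx : x t < ε) :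
    ∃ j ∈ N \ (U ∪ J), x j < ε := by
  by_cases htU : t ∈ U
  · obtain ⟨m, hm⟩ := hM
    have hmNU : m ∈ N \ U := by
      simp only [mem_sdiff, mem_union, not_or] at hm ⊢
      exact ⟨hm.1, hm.2.1⟩
    exact ⟨m, hm, (hUtop t htU m hmNU).trans_lt htx⟩
  · exact ⟨t, by simp [htN, htU, htJ], htx⟩

theorem stmt12_general {ι : Type*} [DecidableEq ι] (N : Finset ι) (f : ℕ)
    (hN : 2 * f + 1 ≤ N.card)
    (A : Finset ι) (hAcard : A.card ≤ f)
    (x : ι → ℝ)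
    (U J : Finset ι)
    (hUcard : U.card = f) (hJcard : J.card = f)
    (hUtop : ∀ u ∈ U, ∀ j ∈ N \ U, x j ≤ x u)
    (S : Finset ι) (hS : 2 * f + 1 ≤ (N ∩ S).card)
    (ε : ℝ) (hx : ∀ j ∈ (N ∩ S) \ A, x j < ε) :
    ∃ j ∈ N \ (U ∪ J), x j < ε := by
  have hJlt : J.card < ((N ∩ S) \ A).card := by
    have := le_card_sdiff A (N ∩ S)
    omega
  obtain ⟨t, htT, htJ⟩ := exists_mem_notMem_of_card_lt_card hJlt
  have htN : t ∈ N := (mem_inter.mp (mem_sdiff.mp htT).1).1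
  have hM : (N \ (U ∪ J)).Nonempty := by
    have := card_union_le U J
    obtain ⟨m, hmN, hmUJ⟩ := exists_mem_notMem_of_card_lt_card (s := U ∪ J) (t := N) (by omega)
    exact ⟨m, mem_sdiff.mpr ⟨hmN, hmUJ⟩⟩
  exact exists_mem_sdiff_union_lt_of_notMem hUtop hM htN htJ (hx t htT)

/-- If at least `2f+1` indices of `N` are sources and every regular source value is below `ε`,
then after trimming the `f` largest and `f` smallest values, some retained value is below `ε`. -/
theorem stmt12 {ι : Type*} [DecidableEq ι] (N : Finset ι) (f : ℕ)
    (hN : 2 * f + 1 ≤ N.card)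
    (A : Finset ι) (hA : A ⊆ N) (hAcard : A.card ≤ f)
    (x : ι → ℝ)
    (U J : Finset ι) (hU : U ⊆ N) (hJ : J ⊆ N)
    (hUcard : U.card = f) (hJcard : J.card = f) (hUJ : Disjoint U J)
    (hUtop : ∀ u ∈ U, ∀ j ∈ N \ U, x j ≤ x u)
    (hJbot : ∀ u ∈ J, ∀ j ∈ N \ J, x u ≤ x j)
    (S : Finset ι) (hS : 2 * f + 1 ≤ (N ∩ S).card)
    (ε : ℝ) (hx : ∀ j ∈ (N ∩ S) \ A, x j < ε) :
    ∃ j ∈ N \ (U ∪ J), x j < ε :=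
  stmt12_general N f hN A hAcard x U J hUcard hJcard hUtop S hS ε hx
end

section
/- Consider a network of n agents on a directed graph G where each agent i runs the min-rule learning algorithm: local beliefs updated by Bayes' rule from i.i.d. private signals with strictly positive likelihoods, and actual beliefs updated as the normalized minimum of its local belief and neighbors' actual beliefs. Suppose (i) for every pair of distinct hypotheses the source set (agents whose marginal likelihoods under the two hypotheses have positive KL-divergence) is nonempty, (ii) for every such pair, all non-source agents are reachable via directed paths from the source set, and (iii) all prior local and actual beliefs are strictly positive. Then for every agent i, μ_{i,t}(θ*) → 1 almost surely, where θ* is the true state generating the signals. -/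
/-!
Fix a sample path on which the strong law of large numbers holds for every agent's
log-likelihood ratios. For an agent that is a source for (θ*, θ), the posterior ratio
π_t(θ) / π_t(θ*) tends to 0; for any other agent the two likelihoods coincide (Gibbs'
inequality is strict) and the ratio is constant. So every π_t(θ*) stays bounded below.

The min rule divides by a sum that is at most Σ_θ π_{t+1}(θ) = 1, so μ_t(θ*) is bounded below
by some γ > 0 for all agents and times. Hence every normalising sum is at least γ, and
μ_{t+1}(i, θ) ≤ γ⁻¹ min(μ_t(j, θ), π_{t+1}(i, θ)) for every neighbour j of i: a wrong
hypothesis dying out at a source agent dies out along every directed path leaving it.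
-/

open Finset MeasureTheory ProbabilityTheory Filter Topology

lemma sum_div_sum_self {α : Type*} {s : Finset α} {f : α → ℝ} (h : ∑ a ∈ s, f a ≠ 0) :
    ∑ a ∈ s, f a / ∑ b ∈ s, f b = 1 := by
  rw [← sum_div, div_self h]

lemma tendsto_atTop_of_tendsto_div_natCast {S : ℕ → ℝ} {m : ℝ} (hm : 0 < m)
    (h : Tendsto (fun n : ℕ => S n / n) atTop (𝓝 m)) : Tendsto S atTop atTop := by
  refine (h.pos_mul_atTop hm tendsto_natCast_atTop_atTop).congr' ?_
  filter_upwards [eventually_ne_atTop 0] with n hn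
  field_simp

lemma eq_of_sum_mul_log_div_nonpos {S : Type*} [Fintype S] {f g : S → ℝ}
    (hf : ∀ w, 0 ≤ f w) (hg : ∀ w, 0 < g w) (hsum : ∑ w, f w = ∑ w, g w)
    (h : ∑ w, f w * Real.log (f w / g w) ≤ 0) : f = g := by
  have hterm : ∀ w, 0 ≤ g w * InformationTheory.klFun (f w / g w) := fun w =>
    mul_nonneg (hg w).le (InformationTheory.klFun_nonneg (div_nonneg (hf w) (hg w).le))
  have hkl : ∑ w, g w * InformationTheory.klFun (f w / g w) =
      ∑ w, f w * Real.log (f w / g w) := by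
    have hw : ∀ w, g w * InformationTheory.klFun (f w / g w) =
        f w * Real.log (f w / g w) + (g w - f w) := fun w => by
      rw [InformationTheory.klFun_apply]; field_simp [(hg w).ne']; ring
    simp only [hw, sum_add_distrib, sum_sub_distrib, hsum, sub_self, add_zero]
  have hzero := (sum_eq_zero_iff_of_nonneg fun w _ => hterm w).1
    (le_antisymm (hkl ▸ h) (sum_nonneg fun w _ => hterm w))
  funext w
  have hkl0 := (mul_eq_zero.1 (hzero w (mem_univ w))).resolve_left (hg w).ne'
  rw [InformationTheory.klFun_eq_zero_iff (div_nonneg (hf w) (hg w).le)] at hkl0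
  exact (div_eq_one_iff_eq (hg w).ne').1 hkl0

lemma ae_tendsto_average_of_fintype {Ω β : Type*} [MeasurableSpace Ω] {P : Measure Ω}
    [IsFiniteMeasure P] [Fintype β] [MeasurableSpace β] [MeasurableSingletonClass β]
    {Y : ℕ → Ω → β} (hY : ∀ t, Measurable (Y t))
    (hindep : Pairwise fun a b => IndepFun (Y a) (Y b) P)
    {p : β → ℝ} (hp : ∀ w, 0 ≤ p w) (hlaw : ∀ t w, P {ω | Y t ω = w} = ENNReal.ofReal (p w))
    (g : β → ℝ) :
    ∀ᵐ ω ∂P, Tendsto (fun n : ℕ => (∑ k ∈ range n, g (Y k ω)) / n) atTop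
      (𝓝 (∑ w, p w * g w)) := by
  have hg : Measurable g := measurable_of_finite g
  have hmap : ∀ t, P.map (Y t) = P.map (Y 0) := fun t =>
    Measure.ext_of_singleton fun w => by
      rw [Measure.map_apply (hY t) (measurableSet_singleton w),
        Measure.map_apply (hY 0) (measurableSet_singleton w)]
      exact (hlaw t w).trans (hlaw 0 w).symm
  have hident : ∀ t, IdentDistrib (g ∘ Y t) (g ∘ Y 0) P P := fun t =>
    (IdentDistrib.mk (hY t).aemeasurable (hY 0).aemeasurable (hmap t)).comp hg
  have hint : Integrable (g ∘ Y 0) P := Integrable.comp_measurable Integrable.of_finite (hY 0)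
  have hmean : ∫ ω, g (Y 0 ω) ∂P = ∑ w, p w * g w := by
    rw [← integral_map (hY 0).aemeasurable hg.aestronglyMeasurable,
      integral_fintype Integrable.of_finite]
    refine sum_congr rfl fun w _ => ?_
    rw [measureReal_def, Measure.map_apply (hY 0) (measurableSet_singleton w)]
    simp only [Set.preimage, Set.mem_singleton_iff]
    rw [hlaw 0 w, ENNReal.toReal_ofReal (hp w), smul_eq_mul]
  have := strong_law_ae_real (fun k => g ∘ Y k) hint
    (fun a b hab => (hindep hab).comp hg hg) hident
  simpa only [Function.comp_apply, hmean] using this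

lemma exists_pos_forall_le_of_finite {ι : Type*} [Finite ι] {f : ι → ℕ → ℝ}
    (h : ∀ i, ∃ α > 0, ∀ t, α ≤ f i t) : ∃ α > 0, ∀ i t, α ≤ f i t := by
  have hev : ∀ i, ∀ᶠ α in 𝓝[>] (0 : ℝ), ∀ t, α ≤ f i t := fun i => by
    obtain ⟨α, hα, hle⟩ := h i
    filter_upwards [Ioc_mem_nhdsGT hα] with β hβ t using hβ.2.trans (hle t)
  obtain ⟨α, hα, hle⟩ := ((eventually_all.2 hev).and self_mem_nhdsWithin).exists
  exact ⟨α, hle, hα⟩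

lemma tendsto_zero_of_succ_le_mul {f g : ℕ → ℝ} {c : ℝ} (hf : ∀ t, 0 ≤ f t)
    (hfg : ∀ t, f (t + 1) ≤ c * g t) (hg : Tendsto g atTop (𝓝 0)) :
    Tendsto f atTop (𝓝 0) := by
  rw [← tendsto_add_atTop_iff_nat 1]
  exact squeeze_zero (fun t => hf _) hfg (by simpa using hg.const_mul c)

lemma tendsto_one_of_sum_eq_one {Θ : Type*} [Fintype Θ] {f : ℕ → Θ → ℝ}
    (hsum : ∀ t, ∑ θ, f t θ = 1) {θ₀ : Θ} (h : ∀ θ ≠ θ₀, Tendsto (f · θ) atTop (𝓝 0)) :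
    Tendsto (f · θ₀) atTop (𝓝 1) := by
  classical
  have hrest : Tendsto (fun t => ∑ θ ∈ univ.erase θ₀, f t θ) atTop (𝓝 0) := by
    simpa only [sum_const_zero] using
      tendsto_finsetSum (univ.erase θ₀) fun θ hθ => h θ (ne_of_mem_erase hθ)
  have hlim := (tendsto_const_nhds (x := (1 : ℝ))).sub hrest
  rw [sub_zero] at hlim
  refine hlim.congr fun t => ?_
  rw [← hsum t, ← add_sum_erase _ _ (mem_univ θ₀), add_sub_cancel_right]

section Bayes

variable {S Θ : Type*} [Fintype Θ] {l : S → Θ → ℝ} {σ : ℕ → S} {q : ℕ → Θ → ℝ}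

variable (l σ q) in
def IsBayesUpdate : Prop :=
  ∀ t θ, q (t + 1) θ = l (σ (t + 1)) θ * q t θ / ∑ p, l (σ (t + 1)) p * q t p

lemma IsBayesUpdate.pos (hrec : IsBayesUpdate l σ q) (hl : ∀ w θ, 0 < l w θ)
    (hq0 : ∀ θ, 0 < q 0 θ) (t : ℕ) (θ : Θ) : 0 < q t θ := by
  induction t generalizing θ with
  | zero => exact hq0 θ
  | succ t ih =>
    rw [hrec t θ]
    exact div_pos (mul_pos (hl _ _) (ih θ))
      (sum_pos (fun p _ => mul_pos (hl _ _) (ih p)) ⟨θ, mem_univ θ⟩)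

lemma IsBayesUpdate.sum_succ [Nonempty Θ] (hrec : IsBayesUpdate l σ q) (hl : ∀ w θ, 0 < l w θ)
    (hq0 : ∀ θ, 0 < q 0 θ) (t : ℕ) : ∑ θ, q (t + 1) θ = 1 := by
  simp only [hrec t]
  exact sum_div_sum_self
    (sum_pos (fun p _ => mul_pos (hl _ _) (hrec.pos hl hq0 t p)) univ_nonempty).ne'

lemma IsBayesUpdate.ratio_eq (hrec : IsBayesUpdate l σ q) (hl : ∀ w θ, 0 < l w θ)
    (hq0 : ∀ θ, 0 < q 0 θ) (θ θ' : Θ) (t : ℕ) :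
    q t θ / q t θ' =
      q 0 θ / q 0 θ' / Real.exp (∑ k ∈ range t, Real.log (l (σ (k + 1)) θ' / l (σ (k + 1)) θ)) := by
  induction t with
  | zero => simp
  | succ t ih =>
    have hZ : 0 < ∑ p, l (σ (t + 1)) p * q t p :=
      sum_pos (fun p _ => mul_pos (hl _ _) (hrec.pos hl hq0 t p)) ⟨θ, mem_univ θ⟩
    rw [sum_range_succ, Real.exp_add, Real.exp_log (div_pos (hl _ _) (hl _ _)), ← div_div, ← ih,
      hrec t θ, hrec t θ']
    field_simp [hZ.ne', (hl (σ (t + 1)) θ).ne', (hl (σ (t + 1)) θ').ne']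

lemma IsBayesUpdate.ratio_tendsto_zero (hrec : IsBayesUpdate l σ q) (hl : ∀ w θ, 0 < l w θ)
    (hq0 : ∀ θ, 0 < q 0 θ) {θ θ' : Θ} {m : ℝ} (hm : 0 < m)
    (havg : Tendsto (fun n : ℕ =>
      (∑ k ∈ range n, Real.log (l (σ (k + 1)) θ' / l (σ (k + 1)) θ)) / n) atTop (𝓝 m)) :
    Tendsto (fun t => q t θ / q t θ') atTop (𝓝 0) := by
  refine ((tendsto_const_nhds (x := q 0 θ / q 0 θ')).div_atTop (Real.tendsto_exp_atTop.comp
    (tendsto_atTop_of_tendsto_div_natCast hm havg))).congr fun t => ?_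
  exact (hrec.ratio_eq hl hq0 θ θ' t).symm

lemma IsBayesUpdate.ratio_bddAbove [Fintype S] (hrec : IsBayesUpdate l σ q)
    (hl : ∀ w θ, 0 < l w θ) (hlsum : ∀ θ, ∑ w, l w θ = 1) (hq0 : ∀ θ, 0 < q 0 θ) (θ θ' : Θ)
    (havg : Tendsto (fun n : ℕ =>
      (∑ k ∈ range n, Real.log (l (σ (k + 1)) θ' / l (σ (k + 1)) θ)) / n) atTop
      (𝓝 (∑ w, l w θ' * Real.log (l w θ' / l w θ)))) :
    BddAbove (Set.range fun t => q t θ / q t θ') := by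
  by_cases hD : 0 < ∑ w, l w θ' * Real.log (l w θ' / l w θ)
  · exact (hrec.ratio_tendsto_zero hl hq0 hD havg).bddAbove_range
  · have heq := eq_of_sum_mul_log_div_nonpos (fun w => (hl w θ').le) (fun w => hl w θ)
      ((hlsum θ').trans (hlsum θ).symm) (not_lt.1 hD)
    refine ⟨q 0 θ / q 0 θ', Set.forall_mem_range.2 fun t => ?_⟩
    rw [hrec.ratio_eq hl hq0 θ θ' t]
    simp [congrFun heq, div_self (hl _ θ).ne']

lemma IsBayesUpdate.tendsto_zero (hrec : IsBayesUpdate l σ q) (hl : ∀ w θ, 0 < l w θ)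
    (hq0 : ∀ θ, 0 < q 0 θ) {θ θ' : Θ} {m : ℝ} (hm : 0 < m)
    (havg : Tendsto (fun n : ℕ =>
      (∑ k ∈ range n, Real.log (l (σ (k + 1)) θ' / l (σ (k + 1)) θ)) / n) atTop (𝓝 m)) :
    Tendsto (fun t => q t θ) atTop (𝓝 0) := by
  have : Nonempty Θ := ⟨θ⟩
  have hq := hrec.pos hl hq0
  have hq'_le_one (t : ℕ) : q (t + 1) θ' ≤ 1 :=
    (single_le_sum (fun p _ => (hq _ p).le) (mem_univ θ')).trans (hrec.sum_succ hl hq0 t).le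
  rw [← tendsto_add_atTop_iff_nat 1]
  exact squeeze_zero (fun t => (hq _ θ).le)
    (fun t => le_div_self (hq _ θ).le (hq _ θ') (hq'_le_one t))
    ((tendsto_add_atTop_iff_nat 1).2 (hrec.ratio_tendsto_zero hl hq0 hm havg))

lemma IsBayesUpdate.exists_pos_le (hrec : IsBayesUpdate l σ q) (hl : ∀ w θ, 0 < l w θ)
    (hq0 : ∀ θ, 0 < q 0 θ) (θ' : Θ) (hbdd : ∀ θ, BddAbove (Set.range fun t => q t θ / q t θ')) :
    ∃ α > 0, ∀ t, α ≤ q (t + 1) θ' := by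
  have : Nonempty Θ := ⟨θ'⟩
  have hq := hrec.pos hl hq0
  choose M hM using hbdd
  have hratio (t : ℕ) : ∑ θ, q t θ / q t θ' ≤ ∑ θ, M θ := sum_le_sum fun θ _ => hM θ ⟨t, rfl⟩
  have hratio_pos (t : ℕ) : 0 < ∑ θ, q t θ / q t θ' :=
    sum_pos (fun θ _ => div_pos (hq t θ) (hq t θ')) univ_nonempty
  refine ⟨(∑ θ, M θ)⁻¹, inv_pos.2 ((hratio_pos 0).trans_le (hratio 0)), fun t => ?_⟩
  calc (∑ θ, M θ)⁻¹ ≤ (∑ θ, q (t + 1) θ / q (t + 1) θ')⁻¹ := inv_anti₀ (hratio_pos _) (hratio _)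
    _ = q (t + 1) θ' := by rw [← sum_div, hrec.sum_succ hl hq0 t, one_div, inv_inv]

end Bayes

section MinRule

variable {ι Θ : Type*} (Nbr : ι → Finset ι) (hNbr : ∀ i, (Nbr i).Nonempty)
  (μ π : ℕ → ι → Θ → ℝ)

def minRuleWeight (t : ℕ) (i : ι) (θ : Θ) : ℝ :=
  min ((Nbr i).inf' (hNbr i) fun j => μ t j θ) (π (t + 1) i θ)

def IsMinRule [Fintype Θ] : Prop :=
  ∀ t i θ, μ (t + 1) i θ = minRuleWeight Nbr hNbr μ π t i θ / ∑ p, minRuleWeight Nbr hNbr μ π t i p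

variable {Nbr hNbr μ π}

lemma minRuleWeight_le_of_mem {t : ℕ} {i k : ι} {θ : Θ} (hk : k ∈ Nbr i) :
    minRuleWeight Nbr hNbr μ π t i θ ≤ μ t k θ :=
  (min_le_left _ _).trans (inf'_le _ hk)

lemma minRuleWeight_le_right (t : ℕ) (i : ι) (θ : Θ) :
    minRuleWeight Nbr hNbr μ π t i θ ≤ π (t + 1) i θ :=
  min_le_right _ _

lemma le_minRuleWeight {t : ℕ} {i : ι} {θ : Θ} {a : ℝ} (hμ : ∀ k, a ≤ μ t k θ)
    (hπ : a ≤ π (t + 1) i θ) : a ≤ minRuleWeight Nbr hNbr μ π t i θ :=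
  le_min (le_inf' _ _ fun k _ => hμ k) hπ

lemma minRuleWeight_pos {t : ℕ} {i : ι} {θ : Θ} (hμ : ∀ k, 0 < μ t k θ)
    (hπ : 0 < π (t + 1) i θ) : 0 < minRuleWeight Nbr hNbr μ π t i θ :=
  lt_min ((lt_inf'_iff _).2 fun k _ => hμ k) hπ

lemma minRule_tendsto_zero_of_reflTransGen {c : ℝ} (hc : 0 ≤ c) (hμ : ∀ t i θ, 0 ≤ μ t i θ)
    (hle : ∀ t i θ, μ (t + 1) i θ ≤ c * minRuleWeight Nbr hNbr μ π t i θ) {θ : Θ} {i j : ι}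
    (hj : Tendsto (fun t => π t j θ) atTop (𝓝 0))
    (hji : Relation.ReflTransGen (fun a b => a ∈ Nbr b) j i) :
    Tendsto (fun t => μ t i θ) atTop (𝓝 0) := by
  induction hji with
  | refl =>
    refine tendsto_zero_of_succ_le_mul (c := c) (hμ · j θ) (fun t => (hle t j θ).trans ?_)
      ((tendsto_add_atTop_iff_nat 1).2 hj)
    exact mul_le_mul_of_nonneg_left (minRuleWeight_le_right t j θ) hc
  | tail _ hbc ih =>
    exact tendsto_zero_of_succ_le_mul (hμ · _ θ)
      (fun t => (hle t _ θ).trans (mul_le_mul_of_nonneg_left (minRuleWeight_le_of_mem hbc) hc)) ih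

variable [Fintype Θ]

lemma IsMinRule.pos (hrec : IsMinRule Nbr hNbr μ π) (hπ : ∀ t i θ, 0 < π t i θ)
    (hμ0 : ∀ i θ, 0 < μ 0 i θ) (t : ℕ) (i : ι) (θ : Θ) : 0 < μ t i θ := by
  induction t generalizing i θ with
  | zero => exact hμ0 i θ
  | succ t ih =>
    have hw (p : Θ) := minRuleWeight_pos (hNbr := hNbr) (fun k => ih k p) (hπ (t + 1) i p)
    rw [hrec t i θ]
    exact div_pos (hw θ) (sum_pos (fun p _ => hw p) ⟨θ, mem_univ θ⟩)

lemma IsMinRule.sum_succ [Nonempty Θ] (hrec : IsMinRule Nbr hNbr μ π)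
    (hw : ∀ t i θ, 0 < minRuleWeight Nbr hNbr μ π t i θ) (t : ℕ) (i : ι) :
    ∑ θ, μ (t + 1) i θ = 1 := by
  simp only [hrec t i]
  exact sum_div_sum_self (sum_pos (fun p _ => hw t i p) univ_nonempty).ne'

lemma IsMinRule.le_of_forall_le (hrec : IsMinRule Nbr hNbr μ π)
    (hw : ∀ t i θ, 0 < minRuleWeight Nbr hNbr μ π t i θ)
    (hπsum : ∀ t i, ∑ θ, π (t + 1) i θ = 1) {θ₀ : Θ} {γ : ℝ}
    (hγμ : ∀ i, γ ≤ μ 0 i θ₀) (hγπ : ∀ t i, γ ≤ π (t + 1) i θ₀) (t : ℕ) (i : ι) :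
    γ ≤ μ t i θ₀ := by
  induction t generalizing i with
  | zero => exact hγμ i
  | succ t ih =>
    have hZ : ∑ p, minRuleWeight Nbr hNbr μ π t i p ≤ 1 :=
      (sum_le_sum fun p _ => minRuleWeight_le_right t i p).trans (hπsum t i).le
    rw [hrec t i θ₀]
    exact (le_minRuleWeight ih (hγπ t i)).trans
      (le_div_self (hw t i θ₀).le (sum_pos (fun p _ => hw t i p) ⟨θ₀, mem_univ θ₀⟩) hZ)

lemma IsMinRule.le_inv_mul_minRuleWeight (hrec : IsMinRule Nbr hNbr μ π)
    (hw : ∀ t i θ, 0 < minRuleWeight Nbr hNbr μ π t i θ) {θ₀ : Θ} {γ : ℝ} (hγ : 0 < γ)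
    (hγμ : ∀ t i, γ ≤ μ t i θ₀) (hγπ : ∀ t i, γ ≤ π (t + 1) i θ₀) (t : ℕ) (i : ι) (θ : Θ) :
    μ (t + 1) i θ ≤ γ⁻¹ * minRuleWeight Nbr hNbr μ π t i θ := by
  have hZ : γ ≤ ∑ p, minRuleWeight Nbr hNbr μ π t i p :=
    (le_minRuleWeight (fun k => hγμ t k) (hγπ t i)).trans
      (single_le_sum (fun p _ => (hw t i p).le) (mem_univ θ₀))
  rw [hrec t i θ, div_eq_inv_mul]
  exact mul_le_mul_of_nonneg_right (inv_anti₀ hγ hZ) (hw t i θ).le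

theorem IsMinRule.tendsto_one [Finite ι] (hrec : IsMinRule Nbr hNbr μ π)
    (hπ : ∀ t i θ, 0 < π t i θ) (hπsum : ∀ t i, ∑ θ, π (t + 1) i θ = 1)
    (hμ0 : ∀ i θ, 0 < μ 0 i θ) {θ₀ : Θ} (hπθ₀ : ∀ i, ∃ α > 0, ∀ t, α ≤ π (t + 1) i θ₀)
    (hsrc : ∀ θ ≠ θ₀, ∀ i, ∃ j, Tendsto (fun t => π t j θ) atTop (𝓝 0) ∧
      Relation.ReflTransGen (fun a b => a ∈ Nbr b) j i) (i : ι) :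
    Tendsto (fun t => μ t i θ₀) atTop (𝓝 1) := by
  have : Nonempty Θ := ⟨θ₀⟩
  have hμ := hrec.pos hπ hμ0
  have hw t i θ : 0 < minRuleWeight Nbr hNbr μ π t i θ :=
    minRuleWeight_pos (fun k => hμ t k θ) (hπ _ i θ)
  obtain ⟨γ, hγ, hγle⟩ := exists_pos_forall_le_of_finite
    (f := fun i t => min (μ 0 i θ₀) (π (t + 1) i θ₀)) fun i => by
      obtain ⟨α, hα, hle⟩ := hπθ₀ i
      exact ⟨min (μ 0 i θ₀) α, lt_min (hμ0 i θ₀) hα, fun t => min_le_min_left _ (hle t)⟩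
  have hγπ t i : γ ≤ π (t + 1) i θ₀ := (hγle i t).trans (min_le_right _ _)
  have hγμ := hrec.le_of_forall_le hw hπsum (fun i => (hγle i 0).trans (min_le_left _ _)) hγπ
  have hle := hrec.le_inv_mul_minRuleWeight hw hγ hγμ hγπ
  rw [← tendsto_add_atTop_iff_nat 1]
  refine tendsto_one_of_sum_eq_one (hrec.sum_succ hw · i) fun θ hθ => ?_
  obtain ⟨j, hj, hji⟩ := hsrc θ hθ i
  exact (tendsto_add_atTop_iff_nat 1).2
    (minRule_tendsto_zero_of_reflTransGen (inv_nonneg.2 hγ.le) (fun t i θ => (hμ t i θ).le) hle hj hji)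

end MinRule

theorem stmt18_general {Ω : Type*} [MeasurableSpace Ω] (Pm : Measure Ω) [IsProbabilityMeasure Pm]
    {ι Θ : Type*} [Fintype ι] [Fintype Θ]
    {Sig : ι → Type*} [∀ i, Fintype (Sig i)] [∀ i, MeasurableSpace (Sig i)]
    [∀ i, MeasurableSingletonClass (Sig i)]
    (Nbr : ι → Finset ι) (hNbr : ∀ i, (Nbr i).Nonempty)
    (l : ∀ i, Sig i → Θ → ℝ) (hl : ∀ i w θ, 0 < l i w θ)
    (hlsum : ∀ i θ, ∑ w, l i w θ = 1)
    (θstar : Θ)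
    (s : ℕ → Ω → ∀ i, Sig i) (hmeas : ∀ t, Measurable (s t))
    (hindep : iIndepFun s Pm)
    (hlaw : ∀ t i w, Pm {ω | s t ω i = w} = ENNReal.ofReal (l i w θstar))
    (π μ : ℕ → ι → Θ → Ω → ℝ)
    (hπ0 : ∀ i θ ω, 0 < π 0 i θ ω) (hμ0 : ∀ i θ ω, 0 < μ 0 i θ ω)
    (hπrec : ∀ t i θ ω, π (t + 1) i θ ω =
      l i (s (t + 1) ω i) θ * π t i θ ω / ∑ p, l i (s (t + 1) ω i) p * π t i p ω)
    (hμrec : ∀ t i θ ω, μ (t + 1) i θ ω =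
      min ((Nbr i).inf' (hNbr i) fun j => μ t j θ ω) (π (t + 1) i θ ω) /
        ∑ p, min ((Nbr i).inf' (hNbr i) fun j => μ t j p ω) (π (t + 1) i p ω))
    -- (ii) every non-source agent is reachable from the source set
    (hreach : ∀ θp θq : Θ, θp ≠ θq → ∀ i : ι,
      ¬ (0 < ∑ w, l i w θp * Real.log (l i w θp / l i w θq)) →
      ∃ j : ι, (0 < ∑ w, l j w θp * Real.log (l j w θp / l j w θq)) ∧
        Relation.ReflTransGen (fun a b => a ∈ Nbr b) j i) :
    ∀ i : ι, ∀ᵐ ω ∂Pm, Tendsto (fun t => μ t i θstar ω) atTop (nhds 1) := by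
  intro i
  have : Nonempty Θ := ⟨θstar⟩
  have hllr : ∀ᵐ ω ∂Pm, ∀ j p, Tendsto (fun n : ℕ => (∑ k ∈ range n,
      Real.log (l j (s (k + 1) ω j) θstar / l j (s (k + 1) ω j) p)) / n) atTop
      (nhds (∑ w, l j w θstar * Real.log (l j w θstar / l j w p))) :=
    ae_all_iff.2 fun j => ae_all_iff.2 fun p =>
      ae_tendsto_average_of_fintype (Y := fun k ω => s (k + 1) ω j)
        (fun k => (measurable_pi_apply j).comp (hmeas _))
        (fun a b hab => (hindep.indepFun (by omega)).comp
          (measurable_pi_apply j) (measurable_pi_apply j))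
        (fun w => (hl j w θstar).le) (fun t w => hlaw (t + 1) j w) _
  filter_upwards [hllr] with ω hω
  have hbayes (j : ι) : IsBayesUpdate (l j) (s · ω j) (π · j · ω) := fun t θ => hπrec t j θ ω
  have hprior (j : ι) (θ : Θ) : 0 < π 0 j θ ω := hπ0 j θ ω
  have hmin : IsMinRule Nbr hNbr (μ · · · ω) (π · · · ω) := fun t j θ => hμrec t j θ ω
  refine hmin.tendsto_one (fun t j => (hbayes j).pos (hl j) (hprior j) t)
    (fun t j => (hbayes j).sum_succ (hl j) (hprior j) t) (fun j θ => hμ0 j θ ω)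
    (fun j => (hbayes j).exists_pos_le (hl j) (hprior j) θstar fun p =>
      (hbayes j).ratio_bddAbove (hl j) (hlsum j) (hprior j) p θstar (hω j p))
    (fun p hp j => ?_) i
  by_cases hD : 0 < ∑ w, l j w θstar * Real.log (l j w θstar / l j w p)
  · exact ⟨j, (hbayes j).tendsto_zero (hl j) (hprior j) hD (hω j p), .refl⟩
  · obtain ⟨j₀, hD₀, hpath⟩ := hreach θstar p (Ne.symm hp) j hD
    exact ⟨j₀, (hbayes j₀).tendsto_zero (hl j₀) (hprior j₀) hD₀ (hω j₀ p), hpath⟩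

/-- Consistency of the min-rule learning algorithm: under global identifiability (nonempty
source sets), reachability of non-source agents from source sets, and positive priors, every
agent's actual belief on the true state converges to one almost surely. -/
theorem stmt18 {Ω : Type*} [MeasurableSpace Ω] (Pm : Measure Ω) [IsProbabilityMeasure Pm]
    {ι Θ : Type*} [Fintype ι] [Fintype Θ]
    {Sig : ι → Type*} [∀ i, Fintype (Sig i)] [∀ i, MeasurableSpace (Sig i)]
    [∀ i, MeasurableSingletonClass (Sig i)]
    (Nbr : ι → Finset ι) (hNbr : ∀ i, (Nbr i).Nonempty)
    (l : ∀ i, Sig i → Θ → ℝ) (hl : ∀ i w θ, 0 < l i w θ)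
    (hlsum : ∀ i θ, ∑ w, l i w θ = 1)
    (θstar : Θ)
    (s : ℕ → Ω → ∀ i, Sig i) (hmeas : ∀ t, Measurable (s t))
    (hindep : iIndepFun s Pm)
    (hlaw : ∀ t i w, Pm {ω | s t ω i = w} = ENNReal.ofReal (l i w θstar))
    (π μ : ℕ → ι → Θ → Ω → ℝ)
    (hπ0 : ∀ i θ ω, 0 < π 0 i θ ω) (hμ0 : ∀ i θ ω, 0 < μ 0 i θ ω)
    (hπ0sum : ∀ i ω, ∑ θ, π 0 i θ ω = 1) (hμ0sum : ∀ i ω, ∑ θ, μ 0 i θ ω = 1)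
    (hπrec : ∀ t i θ ω, π (t + 1) i θ ω =
      l i (s (t + 1) ω i) θ * π t i θ ω / ∑ p, l i (s (t + 1) ω i) p * π t i p ω)
    (hμrec : ∀ t i θ ω, μ (t + 1) i θ ω =
      min ((Nbr i).inf' (hNbr i) fun j => μ t j θ ω) (π (t + 1) i θ ω) /
        ∑ p, min ((Nbr i).inf' (hNbr i) fun j => μ t j p ω) (π (t + 1) i p ω))
    -- (i) for every pair of distinct hypotheses, the source set is nonempty
    (hsource : ∀ θp θq : Θ, θp ≠ θq →
      ∃ i : ι, 0 < ∑ w, l i w θp * Real.log (l i w θp / l i w θq))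
    -- (ii) every non-source agent is reachable from the source set
    (hreach : ∀ θp θq : Θ, θp ≠ θq → ∀ i : ι,
      ¬ (0 < ∑ w, l i w θp * Real.log (l i w θp / l i w θq)) →
      ∃ j : ι, (0 < ∑ w, l j w θp * Real.log (l j w θp / l j w θq)) ∧
        Relation.ReflTransGen (fun a b => a ∈ Nbr b) j i) :
    ∀ i : ι, ∀ᵐ ω ∂Pm, Tendsto (fun t => μ t i θstar ω) atTop (nhds 1) :=
  stmt18_general Pm Nbr hNbr l hl hlsum θstar s hmeas hindep hlaw π μ hπ0 hμ0 hπrec hμrec hreach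
end

section
/- Deterministic propagation lemma for the min-rule: Suppose on a directed graph G, every vertex in V \ S is reachable from S, beliefs μ_{i,t}(θ*) ≥ η > 0 for all i ∈ V and all t ≥ T, local beliefs π_{i,t}(θ*) ≥ η for all i and t ≥ T, and for every source i ∈ S, π_{i,t}(θ) ≤ ε^q for all t ≥ T, where q = d(G)+2 and 0 < ε < η. Then under the min-rule update, μ_{i,t}(θ) < ε for all i ∈ V and all t ≥ T + d(G) + 1. -/
open Finset

/-- `reachIn E r j i` : there is a directed path (possibly trivial) of length at most `r`
from `j` to `i` along edges `E`. -/
def reachIn {V : Type*} (E : V → V → Prop) : ℕ → V → V → Prop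
  | 0, j, i => j = i
  | r + 1, j, i => reachIn E r j i ∨ ∃ k, reachIn E r j k ∧ E k i

/-- Deterministic propagation lemma for the min-rule: if beliefs on the true state are bounded
below by `η > ε` from time `T` on, and every source agent's local belief on the false
hypothesis `θ` is at most `ε^(d+2)` from time `T` on, where every agent is within distance `d`
of the source set `S`, then every agent's actual belief on `θ` is below `ε` after time
`T + d + 1`. -/
theorem stmt19 {ι Θ : Type*} [Fintype ι] [Fintype Θ]
    (Nbr : ι → Finset ι) (hNbr : ∀ i, (Nbr i).Nonempty)
    (S : Finset ι) (d : ℕ)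
    (hreach : ∀ i : ι, ∃ j ∈ S, reachIn (fun a b => a ∈ Nbr b) d j i)
    (θstar θ : Θ) (hne : θ ≠ θstar)
    (μ π : ℕ → ι → Θ → ℝ)
    (hμnn : ∀ t i p, 0 ≤ μ t i p) (hπnn : ∀ t i p, 0 ≤ π t i p)
    (hrec : ∀ t i p, μ (t + 1) i p =
      min ((Nbr i).inf' (hNbr i) fun j => μ t j p) (π (t + 1) i p) /
        ∑ q, min ((Nbr i).inf' (hNbr i) fun j => μ t j q) (π (t + 1) i q))
    (T : ℕ) (η ε : ℝ) (hε : 0 < ε) (hεη : ε < η)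
    (hμη : ∀ i t, T ≤ t → η ≤ μ t i θstar)
    (hπη : ∀ i t, T ≤ t → η ≤ π t i θstar)
    (hsrc : ∀ i ∈ S, ∀ t, T ≤ t → π t i θ ≤ ε ^ (d + 2)) :
    ∀ i, ∀ t, T + d + 1 ≤ t → μ t i θ < ε := by
  intro i0 t0 ht0
  have hη0 : 0 < η := hε.trans hεη
  -- nonnegativity of the min terms
  have hNnn : ∀ t i p, 0 ≤ min ((Nbr i).inf' (hNbr i) fun j => μ t j p) (π (t + 1) i p) := by
    intro t i p
    refine le_min (Finset.le_inf' _ _ fun j _ => hμnn t j p) (hπnn (t + 1) i p)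
  -- denominator lower bound
  have hD : ∀ t i, T ≤ t →
      η ≤ ∑ q, min ((Nbr i).inf' (hNbr i) fun j => μ t j q) (π (t + 1) i q) := by
    intro t i htT
    have h1 : η ≤ min ((Nbr i).inf' (hNbr i) fun j => μ t j θstar) (π (t + 1) i θstar) :=
      le_min (Finset.le_inf' _ _ fun j _ => hμη j t htT)
        (hπη i (t + 1) (htT.trans (Nat.le_succ t)))
    exact h1.trans (Finset.single_le_sum (fun q _ => hNnn t i q) (Finset.mem_univ θstar))
  -- belief upper bound via denominator
  have hub : ∀ t i p, T ≤ t →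
      μ (t + 1) i p ≤ min ((Nbr i).inf' (hNbr i) fun j => μ t j p) (π (t + 1) i p) / η := by
    intro t i p htT
    rw [hrec t i p]
    exact div_le_div_of_nonneg_left (hNnn t i p) hη0 (hD t i htT)
  -- ε < 1 from the normalization
  have hε1 : ε < 1 := by
    have hDpos : (0:ℝ) < ∑ q, min ((Nbr i0).inf' (hNbr i0) fun j => μ T j q)
        (π (T + 1) i0 q) := hη0.trans_le (hD T i0 le_rfl)
    have hsum : ∑ p, μ (T + 1) i0 p = 1 := by
      simp only [hrec T i0]
      rw [← Finset.sum_div, div_self hDpos.ne']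
    have h1 : η ≤ μ (T + 1) i0 θstar := hμη i0 (T + 1) (Nat.le_succ T)
    have h2 : μ (T + 1) i0 θstar ≤ 1 := by
      rw [← hsum]
      exact Finset.single_le_sum (fun p _ => hμnn (T + 1) i0 p) (Finset.mem_univ θstar)
    linarith
  -- main induction: within distance r of the source, belief < ε^(d+1-r)
  have key : ∀ r, r ≤ d → ∀ i, (∃ j ∈ S, reachIn (fun a b => a ∈ Nbr b) r j i) →
      ∀ t, T + r + 1 ≤ t → μ t i θ < ε ^ (d + 1 - r) := by
    intro r
    induction r with
    | zero =>
      rintro _ i ⟨j, hjS, rfl⟩ t ht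
      obtain ⟨s, rfl⟩ : ∃ s, t = s + 1 := ⟨t - 1, by omega⟩
      have hsT : T ≤ s := by omega
      have hN : min ((Nbr j).inf' (hNbr j) fun k => μ s k θ) (π (s + 1) j θ) ≤ ε ^ (d + 2) :=
        (min_le_right _ _).trans (hsrc j hjS (s + 1) (by omega))
      have h1 : μ (s + 1) j θ ≤ ε ^ (d + 2) / η :=
        (hub s j θ hsT).trans (div_le_div_of_nonneg_right hN hη0.le)
      have h2 : ε ^ (d + 2) / η < ε ^ (d + 1) := by
        rw [div_lt_iff₀ hη0]
        calc ε ^ (d + 2) = ε ^ (d + 1) * ε := by ring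
          _ < ε ^ (d + 1) * η := by
              exact mul_lt_mul_of_pos_left hεη (pow_pos hε _)
      have : d + 1 - 0 = d + 1 := rfl
      rw [this]
      exact h1.trans_lt h2
    | succ r ih =>
      rintro hrd i ⟨j, hjS, hji⟩ t ht
      have hrd' : r ≤ d := by omega
      have hexp : d + 1 - r = (d - r) + 1 := by omega
      have hexp' : d + 1 - (r + 1) = d - r := by omega
      rw [hexp']
      rcases hji with hji | ⟨k, hjk, hkN⟩
      · have h1 : μ t i θ < ε ^ (d + 1 - r) := ih hrd' i ⟨j, hjS, hji⟩ t (by omega)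
        refine h1.trans_le ?_
        rw [hexp, pow_succ]
        nlinarith [pow_pos hε (d - r), pow_nonneg hε.le (d - r)]
      · obtain ⟨s, rfl⟩ : ∃ s, t = s + 1 := ⟨t - 1, by omega⟩
        have hsT : T + r + 1 ≤ s := by omega
        have hk : μ s k θ < ε ^ (d + 1 - r) := ih hrd' k ⟨j, hjS, hjk⟩ s hsT
        have hN : min ((Nbr i).inf' (hNbr i) fun j => μ s j θ) (π (s + 1) i θ) < ε ^ (d + 1 - r) :=
          ((min_le_left _ _).trans (Finset.inf'_le _ hkN)).trans_lt hk
        have h1 : μ (s + 1) i θ ≤ min ((Nbr i).inf' (hNbr i) fun j => μ s j θ)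
            (π (s + 1) i θ) / η := hub s i θ (by omega)
        have h2 : min ((Nbr i).inf' (hNbr i) fun j => μ s j θ) (π (s + 1) i θ) / η
            < ε ^ (d + 1 - r) / η := div_lt_div_of_pos_right hN hη0 -- maybe name wrong
        have h3 : ε ^ (d + 1 - r) / η ≤ ε ^ (d - r) := by
          rw [div_le_iff₀ hη0, hexp, pow_succ]
          exact mul_le_mul_of_nonneg_left hεη.le (pow_nonneg hε.le _)
        exact ((h1.trans_lt h2).trans_le h3)
  obtain ⟨j, hjS, hji⟩ := hreach i0
  have := key d le_rfl i0 ⟨j, hjS, hji⟩ t0 ht0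
  simpa using this
end
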